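/- For every natural number H, every natural number k with 1 ≤ k ≤ H − 1, and every real number R_max > 0, there exist a finite state type S, a finite nonempty action type A, a transition function T : S → A → S, a reward function r : S → A → ℝ, a score function u : S → A → ℝ, and an initial state s₀ : S, with |r(s, a)| ≤ R_max for all s and a, such that, writing N = ⌊(H − 1)/(k + 1)⌋: (i) every k-lookahead policy π_k with u-tiebreaking satisfies R_H(π_k, s₀) = 0; (ii) there exists a policy π* with R_H(π*, s₀) = N · R_max; and (iii) the truncated lookahead values of all available actions coincide at every decision state visited by π_k (namely Q̃_k(s, a) = 0 for all actions a at each such state s), so that action selection at those states is determined entirely by the tie-breaking score u. -/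

import Mathlib

/-- Trajectory of a policy `π` in a deterministic environment with transition `T`,
starting from `s₀`: `s_0 = s₀`, `s_{t+1} = T (s_t) (π (s_t))`. -/
def traj {S A : Type*} (T : S → A → S) (π : S → A) (s₀ : S) : ℕ → S
  | 0 => s₀
  | t + 1 => T (traj T π s₀ t) (π (traj T π s₀ t))

/-- `H`-step return of policy `π` from `s₀`: `∑_{t=0}^{H-1} r (s_t) (π (s_t))`. -/
noncomputable def ret {S A : Type*} (T : S → A → S) (r : S → A → ℝ)
    (π : S → A) (s₀ : S) (H : ℕ) : ℝ :=
  ∑ t ∈ Finset.range H, r (traj T π s₀ t) (π (traj T π s₀ t))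

/-- Truncated lookahead value: `Q̃_0 ≡ 0`, and
`Q̃_{j+1}(s, a) = r(s, a) + max_{a'} Q̃_j(T(s, a), a')`;
in particular `Q̃_1 = r`. -/
noncomputable def Qtil {S A : Type*} [Fintype A] [Nonempty A]
    (T : S → A → S) (r : S → A → ℝ) : ℕ → S → A → ℝ
  | 0 => fun _ _ => 0
  | j + 1 => fun s a =>
      r s a + Finset.univ.sup' Finset.univ_nonempty (fun a' => Qtil T r j (T s a) a')

namespace LBaux

/-- Transition: start (`inl`) goes to cycle cell `0` on `true`, to sink on `false`;
cycle cells advance cyclically; sink is absorbing. -/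
def Tr (k : ℕ) : (Unit ⊕ Fin (k+1) ⊕ Unit) → Bool → (Unit ⊕ Fin (k+1) ⊕ Unit)
  | Sum.inl _, b => if b then Sum.inr (Sum.inl 0) else Sum.inr (Sum.inr ())
  | Sum.inr (Sum.inl i), _ => Sum.inr (Sum.inl (i + 1))
  | Sum.inr (Sum.inr _), _ => Sum.inr (Sum.inr ())

/-- Reward: `Rmax` on the last cycle cell, `0` elsewhere. -/
noncomputable def rew (k : ℕ) (Rmax : ℝ) : (Unit ⊕ Fin (k+1) ⊕ Unit) → Bool → ℝ
  | Sum.inr (Sum.inl i), _ => if i = Fin.last k then Rmax else 0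
  | _, _ => 0

/-- Tie-breaking score: prefers `false` at the start state. -/
noncomputable def sc (k : ℕ) : (Unit ⊕ Fin (k+1) ⊕ Unit) → Bool → ℝ
  | Sum.inl _, b => if b then 0 else 1
  | _, _ => 0

lemma qsink (k : ℕ) (Rmax : ℝ) :
    ∀ j a, Qtil (Tr k) (rew k Rmax) j (Sum.inr (Sum.inr ())) a = 0
  | 0, _ => rfl
  | j+1, a => by
    simp [Qtil, Tr, rew, qsink k Rmax j, Finset.sup'_const]

lemma qcell (k : ℕ) (Rmax : ℝ) :
    ∀ j (i : Fin (k+1)) (a : Bool), j + i.val ≤ k →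
      Qtil (Tr k) (rew k Rmax) j (Sum.inr (Sum.inl i)) a = 0
  | 0, _, _, _ => rfl
  | j+1, i, a, h => by
    have hlt : i < Fin.last k := by
      rw [Fin.lt_iff_val_lt_val, Fin.val_last]; omega
    have hne : i ≠ Fin.last k := ne_of_lt hlt
    have hval : (i + 1).val = i.val + 1 := Fin.val_add_one_of_lt hlt
    have ih : ∀ a' : Bool, Qtil (Tr k) (rew k Rmax) j (Sum.inr (Sum.inl (i+1))) a' = 0 :=
      fun a' => qcell k Rmax j (i+1) a' (by omega)
    simp [Qtil, Tr, rew, hne, ih, Finset.sup'_const]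

lemma qstart (k : ℕ) (Rmax : ℝ) :
    ∀ j, j ≤ k + 1 → ∀ a, Qtil (Tr k) (rew k Rmax) j (Sum.inl ()) a = 0
  | 0, _, _ => rfl
  | j+1, hj, a => by
    have ih : ∀ a' : Bool, Qtil (Tr k) (rew k Rmax) j (Tr k (Sum.inl ()) a) a' = 0 := by
      intro a'
      cases a with
      | true =>
        have : Tr k (Sum.inl ()) true = Sum.inr (Sum.inl (0 : Fin (k+1))) := rfl
        rw [this]
        exact qcell k Rmax j 0 a' (by simp; omega)
      | false =>
        have : Tr k (Sum.inl ()) false = Sum.inr (Sum.inr ()) := rfl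
        rw [this]
        exact qsink k Rmax j a'
    simp [Qtil, rew, ih, Finset.sup'_const]

end LBaux

open Fin.NatCast

theorem truncated_lookahead_exact_returns :
    ∀ H k : ℕ, 1 ≤ k → k ≤ H - 1 → ∀ Rmax : ℝ, 0 < Rmax →
    ∃ (S A : Type) (_ : Fintype S) (iA : Fintype A) (nA : Nonempty A)
      (T : S → A → S) (r : S → A → ℝ) (u : S → A → ℝ) (s₀ : S),
      (∀ s a, |r s a| ≤ Rmax) ∧
      (∀ πk : S → A,
        (∀ s a, @Qtil S A iA nA T r k s a ≤ @Qtil S A iA nA T r k s (πk s) ∧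
          (@Qtil S A iA nA T r k s a = @Qtil S A iA nA T r k s (πk s) →
            u s a ≤ u s (πk s))) →
        ret T r πk s₀ H = 0 ∧
        ∀ t < H, ∀ a, @Qtil S A iA nA T r k (traj T πk s₀ t) a = 0) ∧
      (∃ π' : S → A,
        ret T r π' s₀ H = (((H - 1) / (k + 1) : ℕ) : ℝ) * Rmax) := by
  intro H k hk1 hk2 Rmax hR
  obtain ⟨M, rfl⟩ : ∃ M, H = M + 1 := ⟨H - 1, by omega⟩
  refine ⟨Unit ⊕ Fin (k+1) ⊕ Unit, Bool, inferInstance, inferInstance, inferInstance,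
    LBaux.Tr k, LBaux.rew k Rmax, LBaux.sc k, Sum.inl (), ?_, ?_, ?_⟩
  · rintro (s | i | s) a
    · simpa [LBaux.rew] using hR.le
    · simp only [LBaux.rew]
      split
      · simp [abs_of_pos hR]
      · simpa using hR.le
    · simpa [LBaux.rew] using hR.le
  · intro πk hπ
    have hq0 : ∀ a, Qtil (LBaux.Tr k) (LBaux.rew k Rmax) k (Sum.inl ()) a = 0 :=
      LBaux.qstart k Rmax k (by omega)
    have hpol : πk (Sum.inl ()) = false := by
      have h := (hπ (Sum.inl ()) false).2 (by rw [hq0, hq0])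
      cases hb : πk (Sum.inl ()) with
      | false => rfl
      | true =>
        rw [hb] at h
        simp [LBaux.sc] at h
        exact absurd h (by norm_num)
    have htraj : ∀ t, traj (LBaux.Tr k) πk (Sum.inl ()) (t+1) = Sum.inr (Sum.inr ()) := by
      intro t
      induction t with
      | zero =>
        show LBaux.Tr k (Sum.inl ()) (πk (Sum.inl ())) = _
        rw [hpol]
        rfl
      | succ n ih =>
        show LBaux.Tr k (traj (LBaux.Tr k) πk (Sum.inl ()) (n+1))
          (πk (traj (LBaux.Tr k) πk (Sum.inl ()) (n+1))) = _
        rw [ih]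
        rfl
    constructor
    · apply Finset.sum_eq_zero
      intro t _
      cases t with
      | zero => simp [traj, LBaux.rew]
      | succ n => rw [htraj n]; simp [LBaux.rew]
    · intro t _ a
      cases t with
      | zero => exact hq0 a
      | succ n => rw [htraj n]; exact LBaux.qsink k Rmax k a
  · refine ⟨fun _ => true, ?_⟩
    have htr : ∀ t : ℕ, traj (LBaux.Tr k) (fun _ => true) (Sum.inl ()) (t+1)
        = Sum.inr (Sum.inl ((t : ℕ) : Fin (k+1))) := by
      intro t
      induction t with
      | zero => simp [traj, LBaux.Tr]
      | succ n ih =>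
        show LBaux.Tr k (traj (LBaux.Tr k) (fun _ => true) (Sum.inl ()) (n+1)) true = _
        rw [ih]
        show Sum.inr (Sum.inl ((n : Fin (k+1)) + 1)) = _
        push_cast
        rfl
    have hiff : ∀ i : ℕ, ((i : Fin (k+1)) = Fin.last k) ↔ (k+1) ∣ (i+1) := by
      intro i
      rw [Fin.ext_iff, Fin.val_natCast, Fin.val_last]
      constructor
      · intro h
        have h1 : (1 : ℕ) % (k+1) = 1 := Nat.mod_eq_of_lt (by omega)
        have : (i+1) % (k+1) = 0 := by
          rw [Nat.add_mod, h, h1, Nat.mod_self]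
        exact Nat.dvd_of_mod_eq_zero this
      · intro hd
        have h0 : (i+1) % (k+1) = 0 := Nat.mod_eq_zero_of_dvd hd
        have h1 : (1 : ℕ) % (k+1) = 1 := Nat.mod_eq_of_lt (by omega)
        have hm : i % (k+1) < k + 1 := Nat.mod_lt _ (by omega)
        rw [Nat.add_mod, h1] at h0
        by_contra hne
        have hlt : i % (k+1) + 1 < k + 1 := by omega
        rw [Nat.mod_eq_of_lt hlt] at h0
        omega
    have hterm : ∀ i : ℕ,
        LBaux.rew k Rmax (traj (LBaux.Tr k) (fun _ => true) (Sum.inl ()) (i+1)) true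
          = if (k+1) ∣ (i+1) then Rmax else 0 := by
      intro i
      rw [htr i]
      show (if ((i : ℕ) : Fin (k+1)) = Fin.last k then Rmax else 0) = _
      exact if_congr (hiff i) rfl rfl
    rw [ret, Finset.sum_range_succ']
    have h0 : LBaux.rew k Rmax (traj (LBaux.Tr k) (fun _ => true) (Sum.inl ()) 0) true = 0 := rfl
    rw [h0, add_zero]
    calc ∑ i ∈ Finset.range M,
          LBaux.rew k Rmax (traj (LBaux.Tr k) (fun _ => true) (Sum.inl ()) (i+1)) true
        = ∑ i ∈ Finset.range M, (if (k+1) ∣ (i+1) then Rmax else 0) := by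
          exact Finset.sum_congr rfl fun i _ => hterm i
      _ = ∑ i ∈ (Finset.range M).filter (fun i => (k+1) ∣ (i+1)), Rmax :=
          (Finset.sum_filter _ _).symm
      _ = (((Finset.range M).filter (fun i => (k+1) ∣ (i+1))).card : ℝ) * Rmax := by
          rw [Finset.sum_const, nsmul_eq_mul]
      _ = ((M / (k+1) : ℕ) : ℝ) * Rmax := by
          rw [Nat.card_multiples]
      _ = (((M + 1 - 1) / (k + 1) : ℕ) : ℝ) * Rmax := by norm_num
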